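/- arXiv:1801.01359 — 2 statements merged into one kernel-verified Lean document; each statement's English description precedes it below -/
import Mathlib

section
/- Even with dependent input variables, every total Sobol' index is bounded: for every nonempty u ⊆ {1,…,p}, 0 ≤ T_u ≤ 1 (while individual Sobol' indices S_v may be negative). -/
open MeasureTheory ProbabilityTheory

open scoped ENNReal

lemma integrable_mul_of_memℒp_two {α : Type*} [MeasurableSpace α] {μ : Measure α}
    {g f : α → ℝ} (hg : MemLp g 2 μ) (hf : MemLp f 2 μ) :
    Integrable (fun x => g x * f x) μ := by
  rw [← memLp_one_iff_integrable]
  have h := hf.smul hg (p := 2) (q := 2) (r := (1 : ℝ≥0∞))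
  exact h

lemma memℒp_two_condexp {α : Type*} {m m0 : MeasurableSpace α} (hm : m ≤ m0)
    {μ : Measure α} [IsProbabilityMeasure μ] {f : α → ℝ} (hf : MemLp f 2 μ) :
    MemLp (μ[f|m]) 2 μ := by
  set gL : Lp ℝ 2 μ := ↑(condExpL2 ℝ ℝ hm (hf.toLp f)) with hgL
  have hmem : MemLp (gL : α → ℝ) 2 μ := Lp.memLp gL
  refine hmem.ae_eq ?_
  refine ae_eq_condExp_of_forall_setIntegral_eq hm (hf.integrable one_le_two)
    (fun s _ _ => (hmem.integrable one_le_two).integrableOn) (fun s hs hμs => ?_) ?_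
  · rw [hgL, integral_condExpL2_eq hm (hf.toLp f) hs hμs.ne]
    exact setIntegral_congr_ae (hm s hs) ((hf.coeFn_toLp).mono fun x hx _ => hx)
  · exact lpMeas.aestronglyMeasurable _

lemma condexp_cov_bounds {α : Type*} {m m0 : MeasurableSpace α} (hm : m ≤ m0)
    {μ : Measure α} [IsProbabilityMeasure μ] {f : α → ℝ} (hf : MemLp f 2 μ) :
    0 ≤ ∫ x, (μ[f|m]) x * (f x - ∫ y, f y ∂μ) ∂μ ∧
      ∫ x, (μ[f|m]) x * (f x - ∫ y, f y ∂μ) ∂μ ≤ ∫ x, (f x - ∫ y, f y ∂μ) ^ 2 ∂μ := by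
  set c := ∫ y, f y ∂μ with hc
  set g := μ[f|m] with hgdef
  have hfint : Integrable f μ := hf.integrable one_le_two
  have hg2 : MemLp g 2 μ := memℒp_two_condexp hm hf
  have hc2 : MemLp (fun _ : α => c) 2 μ := memLp_const c
  have hF2 : MemLp (fun x => f x - c) 2 μ := hf.sub hc2
  have hh2 : MemLp (fun x => g x - c) 2 μ := hg2.sub hc2
  have hint_h : Integrable (fun x => g x - c) μ := hh2.integrable one_le_two
  have h_int_zero : ∫ x, (g x - c) ∂μ = 0 := by
    rw [integral_sub integrable_condExp (integrable_const c), integral_condExp hm,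
      integral_const]
    simp [hc]
  have hF_int_zero : ∫ x, (f x - c) ∂μ = 0 := by
    rw [integral_sub hfint (integrable_const c), integral_const]
    simp [hc]
  have h_sm : StronglyMeasurable[m] (fun x => g x - c) :=
    stronglyMeasurable_condExp.sub stronglyMeasurable_const
  have hint_hf : Integrable (fun x => (g x - c) * f x) μ := integrable_mul_of_memℒp_two hh2 hf
  have hint_hg : Integrable (fun x => (g x - c) * g x) μ := integrable_mul_of_memℒp_two hh2 hg2
  have hint_hF : Integrable (fun x => (g x - c) * (f x - c)) μ :=
    integrable_mul_of_memℒp_two hh2 hF2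
  have hint_hh : Integrable (fun x => (g x - c) ^ 2) μ := hh2.integrable_sq
  have hint_FF : Integrable (fun x => (f x - c) ^ 2) μ := hF2.integrable_sq
  -- pull-out property
  have hpull : μ[(fun x => g x - c) * f|m] =ᵐ[μ] (fun x => g x - c) * μ[f|m] :=
    condExp_mul_of_stronglyMeasurable_left h_sm (by exact hint_hf) hfint
  have h1 : ∫ x, (g x - c) * f x ∂μ = ∫ x, (g x - c) * g x ∂μ := by
    calc ∫ x, (g x - c) * f x ∂μ
        = ∫ x, (μ[(fun x => g x - c) * f|m]) x ∂μ := (integral_condExp hm).symm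
      _ = ∫ x, (g x - c) * g x ∂μ := by
          refine integral_congr_ae (hpull.mono fun x hx => ?_)
          simpa [hgdef] using hx
  -- orthogonality: ∫ h F = ∫ h²
  have horth : ∫ x, (g x - c) * (f x - c) ∂μ = ∫ x, (g x - c) ^ 2 ∂μ := by
    have e1 : ∫ x, (g x - c) * (f x - c) ∂μ
        = ∫ x, (g x - c) * f x ∂μ - c * ∫ x, (g x - c) ∂μ := by
      rw [← integral_const_mul, ← integral_sub hint_hf (hint_h.const_mul c)]
      congr 1; funext x; ring
    have e2 : ∫ x, (g x - c) * g x ∂μ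
        = ∫ x, (g x - c) ^ 2 ∂μ + c * ∫ x, (g x - c) ∂μ := by
      rw [← integral_const_mul, ← integral_add hint_hh (hint_h.const_mul c)]
      congr 1; funext x; ring
    rw [e1, h1, e2, h_int_zero]
    ring
  -- ∫ g F = ∫ h F
  have hQF : ∫ x, g x * (f x - c) ∂μ = ∫ x, (g x - c) * (f x - c) ∂μ := by
    have : ∫ x, (g x - c) * (f x - c) ∂μ
        = ∫ x, g x * (f x - c) ∂μ - c * ∫ x, (f x - c) ∂μ := by
      rw [← integral_const_mul, ← integral_sub (integrable_mul_of_memℒp_two hg2 hF2)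
        ((hF2.integrable one_le_two).const_mul c)]
      congr 1; funext x; ring
    rw [this, hF_int_zero]; ring
  constructor
  · rw [hQF, horth]
    exact integral_nonneg fun x => sq_nonneg _
  · rw [hQF, horth]
    have hexp : ∫ x, ((f x - c) - (g x - c)) ^ 2 ∂μ
        = ∫ x, (f x - c) ^ 2 ∂μ - ∫ x, (g x - c) ^ 2 ∂μ := by
      have e3 : ∀ x, ((f x - c) - (g x - c)) ^ 2
          = (f x - c) ^ 2 - (2 : ℝ) * ((g x - c) * (f x - c)) + (g x - c) ^ 2 := by
        intro x; ring
      have hint1 : Integrable (fun a => (f a - c) ^ 2 - 2 * ((g a - c) * (f a - c))) μ :=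
        hint_FF.sub (hint_hF.const_mul 2)
      rw [integral_congr_ae (Filter.Eventually.of_forall fun x => e3 x),
        integral_add hint1 hint_hh,
        integral_sub hint_FF (hint_hF.const_mul 2), integral_const_mul, horth]
      ring
    have h0 : 0 ≤ ∫ x, ((f x - c) - (g x - c)) ^ 2 ∂μ := integral_nonneg fun x => sq_nonneg _
    linarith [hexp ▸ h0]


/-- The sub-σ-algebra generated by the coordinates in `v`. -/
def coordSigma {p : ℕ} (Ω : Fin p → Type*) [∀ i, MeasurableSpace (Ω i)]
    (v : Finset (Fin p)) : MeasurableSpace (∀ i, Ω i) :=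
  ⨆ i ∈ v, MeasurableSpace.comap (fun x : ∀ j, Ω j => x i) inferInstance

/-- The recursively defined (generalized ANOVA) components `f_v`. -/
noncomputable def anovaComp {p : ℕ} {Ω : Fin p → Type*} [∀ i, MeasurableSpace (Ω i)]
    (μ : Measure (∀ i, Ω i)) (f : (∀ i, Ω i) → ℝ) : Finset (Fin p) → (∀ i, Ω i) → ℝ
  | v =>
    if v = ∅ then fun _ => ∫ x, f x ∂μ
    else μ[f | coordSigma Ω v] - ∑ w ∈ v.ssubsets.attach, anovaComp μ f w.1
  termination_by v => v.card
  decreasing_by exact Finset.card_lt_card (Finset.mem_ssubsets.mp w.2)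

/-- Variance (`‖f - f₀‖₂²`). -/
noncomputable def fVar {α : Type*} [MeasurableSpace α] (μ : Measure α) (f : α → ℝ) : ℝ :=
  ∫ x, (f x - ∫ y, f y ∂μ) ^ 2 ∂μ

/-- Covariance. -/
noncomputable def fCov {α : Type*} [MeasurableSpace α] (μ : Measure α) (g f : α → ℝ) : ℝ :=
  ∫ x, (g x - ∫ y, g y ∂μ) * (f x - ∫ y, f y ∂μ) ∂μ

/-- Sobol' index `S_v`. -/
noncomputable def sobolIndex {p : ℕ} {Ω : Fin p → Type*} [∀ i, MeasurableSpace (Ω i)]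
    (μ : Measure (∀ i, Ω i)) (f : (∀ i, Ω i) → ℝ) (v : Finset (Fin p)) : ℝ :=
  fCov μ (anovaComp μ f v) f / fVar μ f

/-- Total Sobol' index `T_u`. -/
noncomputable def totalSobolIndex {p : ℕ} {Ω : Fin p → Type*} [∀ i, MeasurableSpace (Ω i)]
    (μ : Measure (∀ i, Ω i)) (f : (∀ i, Ω i) → ℝ) (u : Finset (Fin p)) : ℝ :=
  ∑ v ∈ Finset.univ.powerset.filter (fun v => (v ∩ u).Nonempty), sobolIndex μ f v

/-- Even with dependent input variables, every total Sobol' index satisfies `0 ≤ T_u ≤ 1`. -/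
theorem totalSobolIndex_nonneg_le_one
    {p : ℕ} (hp : 1 ≤ p) (Ω : Fin p → Type*) [∀ i, MeasurableSpace (Ω i)]
    (μ : Measure (∀ i, Ω i)) [IsProbabilityMeasure μ]
    (f : (∀ i, Ω i) → ℝ) (hf : MemLp f 2 μ)
    (hvar : 0 < fVar μ f)
    (u : Finset (Fin p)) (hu : u.Nonempty) :
    0 ≤ totalSobolIndex μ f u ∧ totalSobolIndex μ f u ≤ 1 := by
  classical
  have hfint : Integrable f μ := hf.integrable one_le_two
  set c := ∫ y, f y ∂μ with hc
  have hc2 : MemLp (fun _ : ∀ i, Ω i => c) 2 μ := memLp_const c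
  have hF2 : MemLp (fun x => f x - c) 2 μ := hf.sub hc2
  have hF_int_zero : ∫ x, (f x - c) ∂μ = 0 := by
    rw [integral_sub hfint (integrable_const c), integral_const]
    simp [hc]
  -- the coordinate σ-algebras are sub-σ-algebras
  have hm : ∀ v : Finset (Fin p), coordSigma Ω v ≤ MeasurableSpace.pi :=
    fun v => iSup₂_le fun i _ => (measurable_pi_apply i).comap_le
  -- all ANOVA components are in L²
  have hmem : ∀ v : Finset (Fin p), MemLp (anovaComp μ f v) 2 μ := by
    intro v
    induction v using Finset.strongInduction with
    | _ v ih =>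
      rw [anovaComp]
      split_ifs with h
      · exact memLp_const _
      · exact (memℒp_two_condexp (hm v) hf).sub
          (memLp_finset_sum' _ fun w _ => ih w.1 (Finset.mem_ssubsets.mp w.2))
  -- partial sums of ANOVA components are conditional expectations
  have hsum : ∀ v : Finset (Fin p),
      ∑ w ∈ v.powerset, anovaComp μ f w = μ[f|coordSigma Ω v] := by
    intro v
    by_cases h : v = ∅
    · subst h
      have hbot : coordSigma Ω (∅ : Finset (Fin p)) = ⊥ := by
        simp [coordSigma]
      rw [Finset.powerset_empty, Finset.sum_singleton, hbot, condExp_bot, anovaComp, if_pos rfl]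
    · have hins : v.powerset = insert v v.ssubsets := by
        rw [Finset.ssubsets, Finset.insert_erase (Finset.mem_powerset_self v)]
      have hvnot : v ∉ v.ssubsets := by simp [Finset.ssubsets]
      have hv : anovaComp μ f v
          = μ[f|coordSigma Ω v] - ∑ w ∈ v.ssubsets.attach, anovaComp μ f w.1 := by
        rw [anovaComp]; rw [if_neg h]
      rw [hins, Finset.sum_insert hvnot, hv,
        Finset.sum_attach v.ssubsets (fun w => anovaComp μ f w)]
      exact sub_add_cancel _ _
  -- covariance with f as a plain integral against the centered f
  have hcov : ∀ g : (∀ i, Ω i) → ℝ, MemLp g 2 μ →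
      fCov μ g f = ∫ x, g x * (f x - c) ∂μ := by
    intro g hg
    have h1 : ∀ x, (g x - ∫ y, g y ∂μ) * (f x - c)
        = g x * (f x - c) - (∫ y, g y ∂μ) * (f x - c) := by
      intro x; ring
    rw [fCov, integral_congr_ae (Filter.Eventually.of_forall h1),
      integral_sub (integrable_mul_of_memℒp_two hg hF2)
        ((hF2.integrable one_le_two).const_mul _), integral_const_mul, hF_int_zero]
    ring
  -- sum of covariances over a powerset
  have hstep : ∀ v : Finset (Fin p),
      ∑ w ∈ v.powerset, fCov μ (anovaComp μ f w) f
        = ∫ x, (μ[f|coordSigma Ω v]) x * (f x - c) ∂μ := by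
    intro v
    rw [Finset.sum_congr rfl fun w _ => hcov _ (hmem w),
      ← integral_finset_sum _ fun w _ => integrable_mul_of_memℒp_two (hmem w) hF2]
    refine integral_congr_ae (Filter.Eventually.of_forall fun x => ?_)
    beta_reduce
    rw [← Finset.sum_mul]
    congr 1
    have := congrFun (hsum v) x
    simpa [Finset.sum_apply] using this
  -- the full σ-algebra
  have htop : coordSigma Ω (Finset.univ : Finset (Fin p))
      = (MeasurableSpace.pi : MeasurableSpace (∀ i, Ω i)) := by
    rw [coordSigma]
    simp [MeasurableSpace.pi]
  have htopae : μ[f|coordSigma Ω (Finset.univ : Finset (Fin p))] =ᵐ[μ] f := by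
    rw [htop]
    exact condExp_of_aestronglyMeasurable' le_rfl
      ⟨hf.1.mk f, hf.1.stronglyMeasurable_mk, hf.1.ae_eq_mk⟩ hfint
  have h_top_int : ∫ x, (μ[f|coordSigma Ω (Finset.univ : Finset (Fin p))]) x * (f x - c) ∂μ
      = fVar μ f := by
    rw [integral_congr_ae (htopae.mono fun x hx => by rw [hx])]
    have h2 : ∀ x, f x * (f x - c) = (f x - c) ^ 2 + c * (f x - c) := by intro x; ring
    rw [integral_congr_ae (Filter.Eventually.of_forall h2),
      integral_add hF2.integrable_sq ((hF2.integrable one_le_two).const_mul c),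
      integral_const_mul, hF_int_zero, fVar]
    ring
  -- bounds for the complement term
  obtain ⟨hQc0, hQc1⟩ := condexp_cov_bounds (hm uᶜ) hf
  -- splitting the total index
  have hcompl : Finset.univ.powerset.filter (fun v : Finset (Fin p) => ¬ (v ∩ u).Nonempty)
      = uᶜ.powerset := by
    ext v
    simp only [Finset.mem_filter, Finset.mem_powerset, Finset.subset_univ, true_and,
      Finset.not_nonempty_iff_eq_empty, ← Finset.disjoint_iff_inter_eq_empty]
    rw [← Finset.le_iff_subset, le_compl_iff_disjoint_right]
  have hAsum : ∑ v ∈ Finset.univ.powerset.filter (fun v : Finset (Fin p) => (v ∩ u).Nonempty),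
        fCov μ (anovaComp μ f v) f
      = fVar μ f - ∫ x, (μ[f|coordSigma Ω uᶜ]) x * (f x - c) ∂μ := by
    have hA := Finset.sum_filter_add_sum_filter_not (Finset.univ.powerset)
      (fun v : Finset (Fin p) => (v ∩ u).Nonempty) (fun v => fCov μ (anovaComp μ f v) f)
    rw [hcompl, hstep, hstep, h_top_int] at hA
    linarith
  have hT : totalSobolIndex μ f u
      = (fVar μ f - ∫ x, (μ[f|coordSigma Ω uᶜ]) x * (f x - c) ∂μ) / fVar μ f := by
    rw [totalSobolIndex, ← hAsum, Finset.sum_div]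
    rfl
  rw [hT]
  constructor
  · apply div_nonneg _ hvar.le
    have : ∫ x, (μ[f|coordSigma Ω uᶜ]) x * (f x - c) ∂μ ≤ fVar μ f := by
      rw [fVar]; exact hQc1
    linarith
  · rw [div_le_one hvar]
    linarith
end

section
/- (ANOVA mean-zero property under independence.) Suppose μ is a product probability measure, i.e., the coordinates x₁,…,x_p are independent. Then for every nonempty v ⊆ {1,…,p} and every ℓ ∈ v, the component f_v satisfies E[f_v | σ(x_{∼ℓ})] = 0 almost everywhere; in particular E[f_v] = 0. -/
set_option linter.unusedSectionVars false
set_option maxHeartbeats 1000000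

open MeasureTheory ProbabilityTheory

section Aux

variable {p : ℕ} {Ω : Fin p → Type*} [∀ i, MeasurableSpace (Ω i)]

lemma coordSigma_le (v : Finset (Fin p)) : coordSigma Ω v ≤ MeasurableSpace.pi := by
  apply iSup_le; intro i; apply iSup_le; intro _
  exact (measurable_pi_apply i).comap_le

lemma coordSigma_mono {v w : Finset (Fin p)} (h : v ⊆ w) : coordSigma Ω v ≤ coordSigma Ω w :=
  biSup_mono h

lemma coordSigma_empty : coordSigma Ω (∅ : Finset (Fin p)) = ⊥ := by
  simp [coordSigma]

lemma coordSigma_eq_sup (v : Finset (Fin p)) :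
    coordSigma Ω v
      = v.sup (fun i => MeasurableSpace.comap (fun x : ∀ j, Ω j => x i) inferInstance) :=
  (Finset.sup_eq_iSup _ _).symm

lemma coordSigma_union (a b : Finset (Fin p)) :
    coordSigma Ω (a ∪ b) = coordSigma Ω a ⊔ coordSigma Ω b := by
  simp only [coordSigma_eq_sup, Finset.sup_union]

end Aux

section CondexpIndep

variable {α : Type*}

lemma indepFun_of_indep_of_measurable {m₁ m₂ : MeasurableSpace α} {mΩ : MeasurableSpace α}
    {μ : Measure α} (h : Indep m₁ m₂ μ) {f g : α → ℝ} (hf : Measurable[m₁] f)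
    (hg : Measurable[m₂] g) :
    IndepFun f g μ := by
  rw [IndepFun_iff]
  rw [Indep_iff] at h
  rintro t1 t2 ⟨s1, hs1, rfl⟩ ⟨s2, hs2, rfl⟩
  exact h _ _ (hf hs1) (hg hs2)

lemma setIntegral_inter_indep {m₁ m₃ : MeasurableSpace α} {mΩ : MeasurableSpace α}
    {μ : Measure α} [IsProbabilityMeasure μ] (hm₁ : m₁ ≤ mΩ) (hm₃ : m₃ ≤ mΩ)
    (hindep : Indep m₁ m₃ μ) {h : α → ℝ} (hi : Integrable h μ) (hm : StronglyMeasurable[m₁] h)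
    {A B : Set α} (hA : MeasurableSet[m₁] A) (hB : MeasurableSet[m₃] B) :
    ∫ x in A ∩ B, h x ∂μ = (μ B).toReal * ∫ x in A, h x ∂μ := by
  have hAΩ : MeasurableSet[mΩ] A := hm₁ _ hA
  have hBΩ : MeasurableSet[mΩ] B := hm₃ _ hB
  have hXY : IndepFun (A.indicator h) (B.indicator fun _ => (1:ℝ)) μ :=
    indepFun_of_indep_of_measurable hindep (hm.measurable.indicator hA)
      (measurable_const.indicator hB)
  have hprod : (A ∩ B).indicator h = A.indicator h * B.indicator (fun _ => (1:ℝ)) := by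
    ext x
    by_cases h1 : x ∈ A <;> by_cases h2 : x ∈ B <;>
      simp [Set.indicator_apply, h1, h2]
  calc ∫ x in A ∩ B, h x ∂μ = ∫ x, (A ∩ B).indicator h x ∂μ :=
        (integral_indicator (hAΩ.inter hBΩ)).symm
    _ = ∫ x, (A.indicator h * B.indicator fun _ => (1:ℝ)) x ∂μ := by rw [hprod]
    _ = (∫ x, A.indicator h x ∂μ) * ∫ x, B.indicator (fun _ => (1:ℝ)) x ∂μ :=
        hXY.integral_mul_eq_mul_integral (hi.indicator hAΩ).aestronglyMeasurable
          ((integrable_const 1).indicator hBΩ).aestronglyMeasurable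
    _ = (μ B).toReal * ∫ x in A, h x ∂μ := by
        rw [integral_indicator hAΩ, integral_indicator hBΩ, setIntegral_const]
        simp [mul_comm]
        rw [mul_comm]; rfl

lemma condexp_sup_of_indep {m₁ m₂ m₃ : MeasurableSpace α} {mΩ : MeasurableSpace α}
    {μ : Measure α} [IsProbabilityMeasure μ] (hm₁ : m₁ ≤ mΩ) (hm₂ : m₂ ≤ m₁)
    (hm₃ : m₃ ≤ mΩ) (hindep : Indep m₁ m₃ μ) {g : α → ℝ} (hgi : Integrable g μ)
    (hgm : StronglyMeasurable[m₁] g) :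
    μ[g | m₂ ⊔ m₃] =ᵐ[μ] μ[g | m₂] := by
  have hm₂Ω : m₂ ≤ mΩ := hm₂.trans hm₁
  have hm : m₂ ⊔ m₃ ≤ mΩ := sup_le hm₂Ω hm₃
  have hindep₂ : Indep m₂ m₃ μ := by
    rw [Indep_iff] at hindep ⊢
    exact fun t1 t2 h1 h2 => hindep t1 t2 (hm₂ _ h1) h2
  have hgen : m₂ ⊔ m₃ =
      MeasurableSpace.generateFrom
        {s | ∃ A B, MeasurableSet[m₂] A ∧ MeasurableSet[m₃] B ∧ s = A ∩ B} := by
    refine le_antisymm (sup_le ?_ ?_) (MeasurableSpace.generateFrom_le ?_)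
    · exact fun s hs => MeasurableSpace.measurableSet_generateFrom
        ⟨s, Set.univ, hs, MeasurableSet.univ, (Set.inter_univ s).symm⟩
    · exact fun s hs => MeasurableSpace.measurableSet_generateFrom
        ⟨Set.univ, s, MeasurableSet.univ, hs, (Set.univ_inter s).symm⟩
    · rintro s ⟨A, B, hA, hB, rfl⟩
      exact ((le_sup_left : m₂ ≤ m₂ ⊔ m₃) _ hA).inter ((le_sup_right : m₃ ≤ m₂ ⊔ m₃) _ hB)
  have hpi : IsPiSystem {s | ∃ A B, MeasurableSet[m₂] A ∧ MeasurableSet[m₃] B ∧ s = A ∩ B} := by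
    rintro s ⟨A, B, hA, hB, rfl⟩ t ⟨A', B', hA', hB', rfl⟩ -
    exact ⟨A ∩ A', B ∩ B', hA.inter hA', hB.inter hB', Set.inter_inter_inter_comm A B A' B'⟩
  have heq : ∀ s, MeasurableSet[m₂ ⊔ m₃] s →
      ∫ x in s, (μ[g|m₂]) x ∂μ = ∫ x in s, g x ∂μ := by
    intro s hs
    refine MeasurableSpace.induction_on_inter (α := α)
      (C := fun s _ => ∫ x in s, (μ[g|m₂]) x ∂μ = ∫ x in s, g x ∂μ) (m := m₂ ⊔ m₃) hgen hpi ?_ ?_ ?_ ?_ s hs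
    · simp
    · rintro t ⟨A, B, hA, hB, rfl⟩
      rw [setIntegral_inter_indep hm₁ hm₃ hindep hgi hgm (hm₂ _ hA) hB,
        setIntegral_inter_indep hm₂Ω hm₃ hindep₂ integrable_condExp
          stronglyMeasurable_condExp hA hB,
        setIntegral_condExp hm₂Ω hgi hA]
    · intro t htm ht
      have htΩ : MeasurableSet[mΩ] t := hm _ htm
      have h1 := integral_add_compl htΩ (integrable_condExp (m := m₂) (μ := μ) (f := g))
      have h2 := integral_add_compl htΩ hgi
      have h3 : ∫ x, (μ[g|m₂]) x ∂μ = ∫ x, g x ∂μ := integral_condExp hm₂Ω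
      linarith
    · intro u hud hum hC
      have humΩ : ∀ i, MeasurableSet[mΩ] (u i) := fun i => hm _ (hum i)
      rw [integral_iUnion humΩ hud integrable_condExp.integrableOn,
        integral_iUnion humΩ hud hgi.integrableOn]
      exact tsum_congr hC
  exact (ae_eq_condExp_of_forall_setIntegral_eq hm hgi
    (fun s _ _ => integrable_condExp.integrableOn)
    (fun s hs _ => heq s hs)
    (StronglyMeasurable.aestronglyMeasurable (stronglyMeasurable_condExp.mono le_sup_left))).symm

end CondexpIndep

section PiIndep

variable {p : ℕ} {Ω : Fin p → Type*} [∀ i, MeasurableSpace (Ω i)]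
  (ν : ∀ i, Measure (Ω i)) [∀ i, IsProbabilityMeasure (ν i)]

lemma iIndep_coordEval :
    iIndep (fun i => MeasurableSpace.comap (fun x : ∀ j, Ω j => x i) inferInstance)
      (Measure.pi ν) := by
  rw [iIndep_iff]
  intro S f hf
  have hf' : ∀ i, i ∈ S → ∃ s, MeasurableSet s ∧ (fun x : ∀ j, Ω j => x i) ⁻¹' s = f i :=
    fun i hi => hf i hi
  choose! sets hsets hpre using hf'
  have key : ∀ T : Finset (Fin p), T ⊆ S →
      Measure.pi ν (⋂ i ∈ T, f i) = ∏ i ∈ T, ν i (sets i) := by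
    intro T hT
    have hTpi : (⋂ i ∈ T, f i) =
        Set.univ.pi (fun j => if j ∈ T then sets j else Set.univ) := by
      ext x
      simp only [Set.mem_iInter, Set.mem_pi, Set.mem_univ, true_implies]
      constructor
      · intro hx j
        by_cases hj : j ∈ T
        · rw [if_pos hj]
          have hxx := hx j hj
          rw [← hpre j (hT hj)] at hxx
          exact hxx
        · rw [if_neg hj]; exact Set.mem_univ _
      · intro hx i hi
        have hxx := hx i
        rw [if_pos hi] at hxx
        rw [← hpre i (hT hi)]
        exact hxx
    rw [hTpi, Measure.pi_pi]
    calc ∏ i, ν i (if i ∈ T then sets i else Set.univ)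
        = ∏ i, (if i ∈ T then ν i (sets i) else 1) := by
          refine Finset.prod_congr rfl fun i _ => ?_
          split <;> simp
      _ = ∏ i ∈ Finset.univ ∩ T, ν i (sets i) := Finset.prod_ite_mem _ _ _
      _ = ∏ i ∈ T, ν i (sets i) := by rw [Finset.univ_inter]
  rw [key S (le_refl S)]
  refine Finset.prod_congr rfl fun i hi => ?_
  have h2 := key {i} (Finset.singleton_subset_iff.mpr hi)
  simpa using h2.symm

lemma indep_coordSigma_of_disjoint {u t : Finset (Fin p)} (h : Disjoint u t) :
    Indep (coordSigma Ω u) (coordSigma Ω t) (Measure.pi ν) := by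
  have hind := indep_iSup_of_disjoint
    (m := fun i => MeasurableSpace.comap (fun x : ∀ j, Ω j => x i) inferInstance)
    (fun i => (measurable_pi_apply i).comap_le) (iIndep_coordEval ν)
    (S := (u : Set (Fin p))) (T := (t : Set (Fin p))) (Finset.disjoint_coe.mpr h)
  exact hind

end PiIndep

section AnovaAux

variable {p : ℕ} {Ω : Fin p → Type*} [∀ i, MeasurableSpace (Ω i)]
  {μ : Measure (∀ i, Ω i)} [IsProbabilityMeasure μ] {f : (∀ i, Ω i) → ℝ}

lemma anovaComp_eq (v : Finset (Fin p)) :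
    anovaComp μ f v = if v = ∅ then (fun _ => ∫ x, f x ∂μ)
      else μ[f | coordSigma Ω v] - ∑ w ∈ v.ssubsets.attach, anovaComp μ f w.1 := by
  rw [anovaComp]

lemma anovaComp_stronglyMeasurable (v : Finset (Fin p)) :
    StronglyMeasurable[coordSigma Ω v] (anovaComp μ f v) := by
  induction v using Finset.strongInduction with
  | _ v ih =>
    rw [anovaComp_eq]
    split_ifs with h
    · exact stronglyMeasurable_const
    · refine StronglyMeasurable.sub stronglyMeasurable_condExp ?_
      refine Finset.stronglyMeasurable_sum _ fun w _ => ?_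
      exact (ih w.1 (Finset.mem_ssubsets.mp w.2)).mono
        (coordSigma_mono (Finset.mem_ssubsets.mp w.2).subset)

lemma anovaComp_integrable (hfi : Integrable f μ) (v : Finset (Fin p)) :
    Integrable (anovaComp μ f v) μ := by
  induction v using Finset.strongInduction with
  | _ v ih =>
    rw [anovaComp_eq]
    split_ifs with h
    · exact integrable_const _
    · refine Integrable.sub integrable_condExp ?_
      exact integrable_finset_sum' _ fun w _ => ih w.1 (Finset.mem_ssubsets.mp w.2)

lemma anovaComp_sum_powerset (v : Finset (Fin p)) :
    ∑ w ∈ v.powerset, anovaComp μ f w = μ[f | coordSigma Ω v] := by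
  by_cases hv : v = ∅
  · subst hv
    rw [Finset.powerset_empty, Finset.sum_singleton, anovaComp_eq, if_pos rfl,
      coordSigma_empty, condExp_bot]
  · have hins : v.powerset = insert v v.ssubsets := by
      rw [Finset.ssubsets, Finset.insert_erase (Finset.mem_powerset_self v)]
    have hnm : v ∉ v.ssubsets := fun h => (ssubset_irrefl v) (Finset.mem_ssubsets.mp h)
    rw [hins, Finset.sum_insert hnm, anovaComp_eq, if_neg hv, Finset.sum_attach]
    abel

end AnovaAux

section Main

variable {p : ℕ} {Ω : Fin p → Type*} [∀ i, MeasurableSpace (Ω i)]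
  (ν : ∀ i, Measure (Ω i)) [∀ i, IsProbabilityMeasure (ν i)]

lemma condexp_tower_pi {f : (∀ i, Ω i) → ℝ} {w : Finset (Fin p)} {ℓ : Fin p} (hℓ : ℓ ∈ w) :
    (Measure.pi ν)[(Measure.pi ν)[f | coordSigma Ω w] | coordSigma Ω ({ℓ} : Finset (Fin p))ᶜ]
      =ᵐ[Measure.pi ν] (Measure.pi ν)[f | coordSigma Ω (w.erase ℓ)] := by
  have hsplit : (({ℓ} : Finset (Fin p))ᶜ : Finset (Fin p))
      = (w.erase ℓ) ∪ ((({ℓ} : Finset (Fin p))ᶜ : Finset (Fin p)) \ w) := by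
    ext j
    simp only [Finset.mem_compl, Finset.mem_singleton, Finset.mem_union, Finset.mem_erase,
      Finset.mem_sdiff]
    constructor
    · intro hj
      by_cases hjw : j ∈ w
      · exact Or.inl ⟨hj, hjw⟩
      · exact Or.inr ⟨hj, hjw⟩
    · rintro (⟨hj, _⟩ | ⟨hj, _⟩) <;> exact hj
  have h1 : coordSigma Ω (({ℓ} : Finset (Fin p))ᶜ : Finset (Fin p))
      = coordSigma Ω (w.erase ℓ)
        ⊔ coordSigma Ω ((({ℓ} : Finset (Fin p))ᶜ : Finset (Fin p)) \ w) := by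
    conv_lhs => rw [hsplit]
    exact coordSigma_union _ _
  have hdisj : Disjoint w ((({ℓ} : Finset (Fin p))ᶜ : Finset (Fin p)) \ w) :=
    Finset.disjoint_sdiff
  have hindep := indep_coordSigma_of_disjoint ν hdisj
  rw [h1]
  exact (condexp_sup_of_indep (coordSigma_le w)
    (coordSigma_mono (Finset.erase_subset ℓ w)) (coordSigma_le _) hindep
    integrable_condExp stronglyMeasurable_condExp).trans
    (condExp_condExp_of_le (coordSigma_mono (Finset.erase_subset ℓ w)) (coordSigma_le w))

lemma anovaComp_condexp_zero_pi {f : (∀ i, Ω i) → ℝ} (hfi : Integrable f (Measure.pi ν))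
    (v : Finset (Fin p)) : ∀ ℓ ∈ v,
      (Measure.pi ν)[anovaComp (Measure.pi ν) f v | coordSigma Ω ({ℓ} : Finset (Fin p))ᶜ]
        =ᵐ[Measure.pi ν] 0 := by
  induction v using Finset.strongInduction with
  | _ v ih =>
    intro ℓ hℓ
    set μ := Measure.pi ν with hμdef
    have hv : v ≠ ∅ := Finset.ne_empty_of_mem hℓ
    have hA : ∀ w, Integrable (anovaComp μ f w) μ := anovaComp_integrable hfi
    have hrw : anovaComp μ f v = μ[f | coordSigma Ω v] - ∑ w ∈ v.ssubsets, anovaComp μ f w := by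
      rw [anovaComp_eq, if_neg hv, Finset.sum_attach]
    have hsplit : v.ssubsets
        = (v.erase ℓ).powerset ∪ (v.ssubsets.filter (fun w => ℓ ∈ w)) := by
      ext w
      simp only [Finset.mem_union, Finset.mem_powerset, Finset.mem_ssubsets, Finset.mem_filter,
        Finset.subset_erase]
      constructor
      · intro hw
        by_cases hl : ℓ ∈ w
        · exact Or.inr ⟨hw, hl⟩
        · exact Or.inl ⟨hw.subset, hl⟩
      · rintro (⟨h1, h2⟩ | ⟨h1, _⟩)
        · exact Finset.ssubset_iff_subset_ne.mpr ⟨h1, fun h => h2 (h ▸ hℓ)⟩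
        · exact h1
    have hdisj : Disjoint ((v.erase ℓ).powerset) (v.ssubsets.filter (fun w => ℓ ∈ w)) := by
      rw [Finset.disjoint_left]
      intro w hw hw2
      have h1 : ℓ ∉ w := (Finset.subset_erase.mp (Finset.mem_powerset.mp hw)).2
      exact h1 (Finset.mem_filter.mp hw2).2
    have hfix : ∀ w ∈ (v.erase ℓ).powerset,
        μ[anovaComp μ f w | coordSigma Ω ({ℓ} : Finset (Fin p))ᶜ] = anovaComp μ f w := by
      intro w hw
      have hsub : w ⊆ (({ℓ} : Finset (Fin p))ᶜ : Finset (Fin p)) := by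
        intro j hj
        have := Finset.mem_powerset.mp hw hj
        simp only [Finset.mem_compl, Finset.mem_singleton]
        exact (Finset.mem_erase.mp this).1
      exact condExp_of_stronglyMeasurable (coordSigma_le _)
        ((anovaComp_stronglyMeasurable w).mono (coordSigma_mono hsub)) (hA w)
    have hz : (∑ w ∈ v.ssubsets.filter (fun w => ℓ ∈ w),
        μ[anovaComp μ f w | coordSigma Ω ({ℓ} : Finset (Fin p))ᶜ]) =ᵐ[μ] 0 := by
      have hall : ∀ᵐ x ∂μ, ∀ w ∈ v.ssubsets.filter (fun w => ℓ ∈ w),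
          (μ[anovaComp μ f w | coordSigma Ω ({ℓ} : Finset (Fin p))ᶜ]) x = 0 := by
        rw [Filter.eventually_all_finset]
        intro w hw
        have hmem := Finset.mem_filter.mp hw
        have := ih w (Finset.mem_ssubsets.mp hmem.1) ℓ hmem.2
        filter_upwards [this] with x hx
        simpa using hx
      filter_upwards [hall] with x hx
      simp only [Finset.sum_apply, Pi.zero_apply]
      exact Finset.sum_eq_zero hx
    have hpowsum : (∑ w ∈ (v.erase ℓ).powerset,
        μ[anovaComp μ f w | coordSigma Ω ({ℓ} : Finset (Fin p))ᶜ])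
          = μ[f | coordSigma Ω (v.erase ℓ)] := by
      rw [Finset.sum_congr rfl hfix, anovaComp_sum_powerset]
    have hz2 : μ[(∑ w ∈ v.ssubsets, anovaComp μ f w) | coordSigma Ω ({ℓ} : Finset (Fin p))ᶜ]
        =ᵐ[μ] μ[f | coordSigma Ω (v.erase ℓ)] + 0 := by
      refine (condExp_finsetSum (fun w _ => hA w) _).trans ?_
      rw [hsplit, Finset.sum_union hdisj, hpowsum]
      exact Filter.EventuallyEq.add Filter.EventuallyEq.rfl hz
    calc μ[anovaComp μ f v | coordSigma Ω ({ℓ} : Finset (Fin p))ᶜ]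
        = μ[(μ[f | coordSigma Ω v] - ∑ w ∈ v.ssubsets, anovaComp μ f w)
            | coordSigma Ω ({ℓ} : Finset (Fin p))ᶜ] := by rw [hrw]
      _ =ᵐ[μ] μ[μ[f | coordSigma Ω v] | coordSigma Ω ({ℓ} : Finset (Fin p))ᶜ]
            - μ[(∑ w ∈ v.ssubsets, anovaComp μ f w)
              | coordSigma Ω ({ℓ} : Finset (Fin p))ᶜ] :=
          condExp_sub integrable_condExp (integrable_finset_sum' _ fun w _ => hA w) _
      _ =ᵐ[μ] μ[f | coordSigma Ω (v.erase ℓ)] - (μ[f | coordSigma Ω (v.erase ℓ)] + 0) :=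
          Filter.EventuallyEq.sub (condexp_tower_pi ν hℓ) hz2
      _ = 0 := by rw [add_zero, sub_self]

end Main

/-- ANOVA mean-zero property under independence: if `μ` is a product measure, then for
every nonempty `v` and every `ℓ ∈ v`, `E[f_v | σ(x_{∼ℓ})] = 0` a.e.; in particular
`E[f_v] = 0`. -/
theorem anovaComp_condexp_zero_of_indep
    {p : ℕ} (hp : 1 ≤ p) (Ω : Fin p → Type*) [∀ i, MeasurableSpace (Ω i)]
    (ν : ∀ i, Measure (Ω i)) [∀ i, IsProbabilityMeasure (ν i)]
    (μ : Measure (∀ i, Ω i)) [IsProbabilityMeasure μ] (hμ : μ = Measure.pi ν)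
    (f : (∀ i, Ω i) → ℝ) (hf : MemLp f 2 μ)
    (v : Finset (Fin p)) (hv : v.Nonempty) (ℓ : Fin p) (hℓ : ℓ ∈ v) :
    (μ[anovaComp μ f v | coordSigma Ω ({ℓ} : Finset (Fin p))ᶜ] =ᵐ[μ] 0) ∧
    ∫ x, anovaComp μ f v x ∂μ = 0 := by
  subst hμ
  have hfi : Integrable f (Measure.pi ν) := hf.integrable one_le_two
  have h1 := anovaComp_condexp_zero_pi ν hfi v ℓ hℓ
  refine ⟨h1, ?_⟩
  have h2 : ∫ x, ((Measure.pi ν)[anovaComp (Measure.pi ν) f v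
      | coordSigma Ω ({ℓ} : Finset (Fin p))ᶜ]) x ∂(Measure.pi ν)
        = ∫ x, anovaComp (Measure.pi ν) f v x ∂(Measure.pi ν) :=
    integral_condExp (coordSigma_le _)
  rw [← h2, integral_congr_ae h1]
  simp
end
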